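/- As formal power series, (Σ_{m≥1} C(2m,m) zᵐ/m) · (Σ_{m≥0} C(2m,m) zᵐ) = Σ_{m≥1} C(2m,m)·(Σ_{k=1}^{m}(1/(k-1/2) - 1/k))·zᵐ. -/

import Mathlib

noncomputable def cb (n : ℕ) : ℚ := n.centralBinom

lemma cb_rec (n : ℕ) : ((n : ℚ) + 1) * cb (n + 1) = (4 * n + 2) * cb n := by
  have h := Nat.succ_mul_centralBinom_succ n
  have h2 : ((n + 1) * Nat.centralBinom (n + 1) : ℚ) = (2 * (2 * n + 1) * Nat.centralBinom n : ℚ) := by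
    exact_mod_cast congrArg (Nat.cast : ℕ → ℚ) h
  unfold cb; push_cast at h2 ⊢; linarith

noncomputable def aa (j : ℕ) : ℚ := if j = 0 then 0 else cb j / j

lemma j_mul_aa (j : ℕ) : (j : ℚ) * aa j = if j = 0 then 0 else cb j := by
  unfold aa
  rcases eq_or_ne j 0 with h | h
  · simp [h]
  · have : (j : ℚ) ≠ 0 := Nat.cast_ne_zero.mpr h
    simp only [h, if_false]; field_simp

lemma sym (n : ℕ) (f : ℕ → ℚ) :
    ∑ j ∈ Finset.range (n + 1), ((n - j : ℕ) : ℚ) * (f j * cb (n - j))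
      = ∑ j ∈ Finset.range (n + 1), (f j * cb (n - j)) * (n : ℚ)
        - ∑ j ∈ Finset.range (n + 1), (j : ℚ) * (f j * cb (n - j)) := by
  rw [← Finset.sum_sub_distrib]
  apply Finset.sum_congr rfl
  intro j hj
  have hj' : j ≤ n := Nat.lt_succ_iff.mp (Finset.mem_range.mp hj)
  rw [Nat.cast_sub hj']
  ring

lemma wsum (n : ℕ) :
    2 * ∑ j ∈ Finset.range (n + 1), (j : ℚ) * (cb j * cb (n - j))
      = n * ∑ j ∈ Finset.range (n + 1), cb j * cb (n - j) := by
  have hrefl := Finset.sum_range_reflect (fun j => (j : ℚ) * (cb j * cb (n - j))) (n + 1)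
  have h1 : ∑ j ∈ Finset.range (n + 1), ((n - j : ℕ) : ℚ) * (cb j * cb (n - j))
      = ∑ j ∈ Finset.range (n + 1), (j : ℚ) * (cb j * cb (n - j)) := by
    rw [← hrefl]
    apply Finset.sum_congr rfl
    intro j hj
    have hj' : j ≤ n := Nat.lt_succ_iff.mp (Finset.mem_range.mp hj)
    have : n + 1 - 1 - j = n - j := by omega
    rw [this]
    have h2 : n - (n - j) = j := by omega
    rw [h2]
    ring
  have h3 := sym n cb
  rw [h1] at h3
  have h4 : ∑ j ∈ Finset.range (n + 1), (cb j * cb (n - j)) * (n : ℚ)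
      = n * ∑ j ∈ Finset.range (n + 1), cb j * cb (n - j) := by
    rw [Finset.mul_sum]
    apply Finset.sum_congr rfl
    intros; ring
  linarith

lemma Tconv (n : ℕ) : ∑ j ∈ Finset.range (n + 1), cb j * cb (n - j) = 4 ^ n := by
  induction n with
  | zero => simp [cb, Nat.centralBinom]
  | succ n ih =>
    have hW : 2 * ∑ j ∈ Finset.range (n + 1), (j : ℚ) * (cb j * cb (n - j)) = n * 4 ^ n := by
      rw [wsum n, ih]
    have hshift : ∑ j ∈ Finset.range (n + 2), (j : ℚ) * (cb j * cb (n + 1 - j))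
        = 4 * ∑ j ∈ Finset.range (n + 1), (j : ℚ) * (cb j * cb (n - j))
          + 2 * ∑ j ∈ Finset.range (n + 1), cb j * cb (n - j) := by
      rw [Finset.sum_range_succ']
      simp only [Nat.cast_zero, zero_mul, add_zero, Nat.succ_sub_succ]
      rw [Finset.mul_sum, Finset.mul_sum, ← Finset.sum_add_distrib]
      apply Finset.sum_congr rfl
      intro j hj
      have : ((j : ℚ) + 1) * cb (j + 1) = (4 * j + 2) * cb j := cb_rec j
      push_cast
      calc ((j : ℚ) + 1) * (cb (j + 1) * cb (n - j))
          = (((j : ℚ) + 1) * cb (j + 1)) * cb (n - j) := by ring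
        _ = ((4 * j + 2) * cb j) * cb (n - j) := by rw [this]
        _ = 4 * ((j : ℚ) * (cb j * cb (n - j))) + 2 * (cb j * cb (n - j)) := by ring
    have hw2 := wsum (n + 1)
    simp only [show n + 1 + 1 = n + 2 from rfl] at hw2
    rw [hshift, ih] at hw2
    have hne : ((n : ℚ) + 1) ≠ 0 := by positivity
    have : ((n : ℚ) + 1) * ∑ j ∈ Finset.range (n + 2), cb j * cb (n + 1 - j)
        = ((n : ℚ) + 1) * 4 ^ (n + 1) := by
      push_cast at hw2
      linear_combination 4 * hW - hw2
    exact mul_left_cancel₀ hne this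

noncomputable def F (n : ℕ) : ℚ := ∑ j ∈ Finset.range (n + 1), aa j * cb (n - j)

lemma jsum (n : ℕ) :
    ∑ j ∈ Finset.range (n + 1), (j : ℚ) * (aa j * cb (n - j)) = 4 ^ n - cb n := by
  have h1 : ∀ j ∈ Finset.range (n + 1),
      (j : ℚ) * (aa j * cb (n - j))
        = cb j * cb (n - j) - (if j = 0 then cb (n - j) else 0) := by
    intro j _
    have := j_mul_aa j
    rcases eq_or_ne j 0 with h | h
    · simp [h, aa, cb, Nat.centralBinom]
    · simp only [h, if_false]
      calc (j : ℚ) * (aa j * cb (n - j)) = ((j:ℚ) * aa j) * cb (n - j) := by ring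
        _ = cb j * cb (n - j) - 0 := by rw [this]; simp [h]
  rw [Finset.sum_congr rfl h1, Finset.sum_sub_distrib, Tconv n]
  congr 1
  rw [Finset.sum_ite_eq' (Finset.range (n + 1)) 0 (fun j => cb (n - j))]
  simp

lemma nsum (n : ℕ) :
    ∑ j ∈ Finset.range (n + 1), ((n - j : ℕ) : ℚ) * (aa j * cb (n - j))
      = n * F n - (4 ^ n - cb n) := by
  rw [sym n aa, jsum n]
  congr 1
  unfold F
  rw [Finset.mul_sum]
  apply Finset.sum_congr rfl
  intros; ring

lemma F_rec (n : ℕ) :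
    ((n : ℚ) + 1) * F (n + 1) = (4 * n + 2) * F n + 4 * cb n - cb (n + 1) := by
  have hsplit : ((n : ℚ) + 1) * F (n + 1)
      = (∑ j ∈ Finset.range (n + 2), (j : ℚ) * (aa j * cb (n + 1 - j)))
        + ∑ j ∈ Finset.range (n + 2), ((n + 1 - j : ℕ) : ℚ) * (aa j * cb (n + 1 - j)) := by
    unfold F
    rw [Finset.mul_sum, ← Finset.sum_add_distrib]
    apply Finset.sum_congr rfl
    intro j hj
    have hj' : j ≤ n + 1 := Nat.lt_succ_iff.mp (Finset.mem_range.mp hj)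
    have : ((n + 1 - j : ℕ) : ℚ) = (n : ℚ) + 1 - j := by
      rw [Nat.cast_sub hj']; push_cast; ring
    rw [this]; ring
  have hS2 : ∑ j ∈ Finset.range (n + 2), ((n + 1 - j : ℕ) : ℚ) * (aa j * cb (n + 1 - j))
      = 4 * ((n : ℚ) * F n - (4 ^ n - cb n)) + 2 * F n := by
    rw [Finset.sum_range_succ]
    simp only [Nat.sub_self, Nat.cast_zero, zero_mul, add_zero]
    have hterm : ∀ j ∈ Finset.range (n + 1),
        ((n + 1 - j : ℕ) : ℚ) * (aa j * cb (n + 1 - j))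
          = 4 * (((n - j : ℕ) : ℚ) * (aa j * cb (n - j))) + 2 * (aa j * cb (n - j)) := by
      intro j hj
      have hj' : j ≤ n := Nat.lt_succ_iff.mp (Finset.mem_range.mp hj)
      have h1 : n + 1 - j = (n - j) + 1 := by omega
      rw [h1]
      have h2 : (((n - j) : ℕ) : ℚ) + 1 = (((n - j) + 1 : ℕ) : ℚ) := by push_cast; ring
      have h3 := cb_rec (n - j)
      calc (((n - j) + 1 : ℕ) : ℚ) * (aa j * cb ((n - j) + 1))
          = aa j * ((((n - j : ℕ) : ℚ) + 1) * cb ((n - j) + 1)) := by rw [← h2]; ring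
        _ = aa j * ((4 * ((n - j : ℕ) : ℚ) + 2) * cb (n - j)) := by rw [h3]
        _ = 4 * (((n - j : ℕ) : ℚ) * (aa j * cb (n - j))) + 2 * (aa j * cb (n - j)) := by ring
    rw [Finset.sum_congr rfl hterm, Finset.sum_add_distrib, ← Finset.mul_sum, ← Finset.mul_sum,
      nsum n]
    have : ∑ j ∈ Finset.range (n + 1), aa j * cb (n - j) = F n := rfl
    rw [this]
  rw [hsplit, jsum (n + 1), hS2]
  ring

noncomputable def dd (n : ℕ) : ℚ := ∑ k ∈ Finset.Icc 1 n, (1 / ((k : ℚ) - 1 / 2) - 1 / k)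

lemma dd_succ (n : ℕ) :
    dd (n + 1) = dd n + (1 / (((n : ℚ) + 1) - 1 / 2) - 1 / ((n : ℚ) + 1)) := by
  unfold dd
  rw [Finset.sum_Icc_succ_top (by omega : 1 ≤ n + 1)]
  push_cast
  ring_nf

lemma R_rec (n : ℕ) :
    ((n : ℚ) + 1) * (cb (n + 1) * dd (n + 1))
      = (4 * n + 2) * (cb n * dd n) + 4 * cb n - cb (n + 1) := by
  have hne1 : ((n : ℚ) + 1) ≠ 0 := by positivity
  have hne2 : ((n : ℚ) + 1) - 1 / 2 ≠ 0 := by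
    have : (0 : ℚ) < (n : ℚ) + 1 - 1 / 2 := by
      have : (0 : ℚ) ≤ (n : ℚ) := Nat.cast_nonneg n
      linarith
    linarith
  have hc : cb (n + 1) = (4 * n + 2) * cb n / ((n : ℚ) + 1) := by
    field_simp
    linarith [cb_rec n]
  set e : ℚ := 1 / (((n : ℚ) + 1) - 1 / 2) - 1 / ((n : ℚ) + 1) with he
  have key : (4 * (n : ℚ) + 2) * e = 4 - (4 * n + 2) / ((n : ℚ) + 1) := by
    rw [he, mul_sub]
    have h4 : (4 * (n : ℚ) + 2) * (1 / (((n : ℚ) + 1) - 1 / 2)) = 4 := by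
      rw [show (4 * (n : ℚ) + 2) = 4 * (((n : ℚ) + 1) - 1 / 2) by ring, mul_one_div,
        mul_div_assoc, div_self hne2, mul_one]
    rw [h4, mul_one_div]
  rw [dd_succ]
  have h3 := cb_rec n
  calc ((n : ℚ) + 1) * (cb (n + 1) * (dd n + e))
      = (((n : ℚ) + 1) * cb (n + 1)) * (dd n + e) := by ring
    _ = ((4 * n + 2) * cb n) * (dd n + e) := by rw [h3]
    _ = (4 * n + 2) * (cb n * dd n) + cb n * ((4 * (n : ℚ) + 2) * e) := by ring
    _ = (4 * n + 2) * (cb n * dd n) + cb n * (4 - (4 * n + 2) / ((n : ℚ) + 1)) := by rw [key]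
    _ = (4 * n + 2) * (cb n * dd n) + 4 * cb n - (4 * n + 2) * cb n / ((n : ℚ) + 1) := by ring
    _ = (4 * n + 2) * (cb n * dd n) + 4 * cb n - cb (n + 1) := by rw [← hc]

lemma F_eq (n : ℕ) : F n = cb n * dd n := by
  induction n with
  | zero =>
    simp [F, dd, aa]
  | succ n ih =>
    have h1 := F_rec n
    have h2 := R_rec n
    have hne : ((n : ℚ) + 1) ≠ 0 := by positivity
    apply mul_left_cancel₀ hne
    rw [h1, h2, ih]

open PowerSeries in
theorem logQ_times_g0 :
    (PowerSeries.mk fun m : ℕ =>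
        if m = 0 then (0 : ℚ) else (Nat.centralBinom m : ℚ) / m) *
      (PowerSeries.mk fun m : ℕ => (Nat.centralBinom m : ℚ))
    = PowerSeries.mk fun m : ℕ =>
        (Nat.centralBinom m : ℚ) *
          ∑ k ∈ Finset.Icc 1 m, (1 / ((k : ℚ) - 1 / 2) - 1 / k) := by
  ext n
  rw [PowerSeries.coeff_mul, Finset.Nat.sum_antidiagonal_eq_sum_range_succ_mk]
  simp only [PowerSeries.coeff_mk]
  have := F_eq n
  unfold F aa cb dd at this
  convert this using 1
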